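/- Let c_v > 0, ϱ > 0, p₋, p₊ > 0, ϱ₁ > (2c_v+1)ϱ and v₋ ∈ ℝ. For u > 0 set v₊ := v₋ − u and define μ₀ := ½(−ϱu/(ϱ₁−ϱ) + (p₋−p₊)/(ϱu) + v₋ + v₊), μ₁ := ½(ϱu/(ϱ₁−ϱ) + (p₋−p₊)/(ϱu) + v₋ + v₊), β := (ϱv₊ + μ₁(ϱ₁−ϱ))/ϱ₁, X := ϱ(p₊ − p₋)((2c_v+1)ϱ₁ − ϱ), Y := ϱ₁ϱ·((v₋+μ₀)/(v₋−μ₀) + (μ₁+v₊)/(μ₁−v₊)), Z := p₊ + ((ϱ₁−ϱ)ϱ/ϱ₁)·(v₊ − μ₁)², p₁ := Z − X/Y, ε₁ := X/(ϱ₁Y), and ε₂ := (1/(ϱ₁ϱ))·[(ϱ₁−ϱ)(p₁+p₊) + 2c_v(ϱ₁p₊ − ϱp₁)] + ε₁·((v₊+β)/(v₊−β)·(ϱ₁−ϱ)/ϱ − 1). Then there exists u₀ > 0 such that for all u ≥ u₀: v₋ − μ₀ > 0, μ₁ − v₊ > 0, Y < 0, v₊ ≠ β, and ε₂ > 0. 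-/

import Mathlib

open Filter Topology

lemma tendsto_lin (a b : ℝ) (ha : 0 < a) :
    Tendsto (fun u : ℝ => a * u + b / u) atTop atTop :=
  (tendsto_id.const_mul_atTop ha).atTop_add (tendsto_const_nhds.div_atTop tendsto_id)

lemma tendsto_ratio (p q s a b : ℝ) (ha : a ≠ 0) :
    Tendsto (fun u : ℝ => (p * u + q + s / u) / (a * u + b / u)) atTop (𝓝 (p / a)) := by
  have hnum : Tendsto (fun u : ℝ => p + q / u + s / u ^ 2) atTop (𝓝 p) := by
    have h1 : Tendsto (fun u : ℝ => q / u) atTop (𝓝 0) :=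
      tendsto_const_nhds.div_atTop tendsto_id
    have h2 : Tendsto (fun u : ℝ => s / u ^ 2) atTop (𝓝 0) :=
      tendsto_const_nhds.div_atTop (tendsto_pow_atTop two_ne_zero)
    simpa using (tendsto_const_nhds.add h1).add h2
  have hden : Tendsto (fun u : ℝ => a + b / u ^ 2) atTop (𝓝 a) := by
    simpa using tendsto_const_nhds.add
      (tendsto_const_nhds.div_atTop (tendsto_pow_atTop two_ne_zero) : Tendsto (fun u : ℝ => b / u ^ 2) atTop (𝓝 0))
  refine (hnum.div hden ha).congr' ?_
  filter_upwards [eventually_gt_atTop (0:ℝ)] with u hu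
  have hu' : u ≠ 0 := hu.ne'
  have h2 : p + q / u + s / u ^ 2 = (p * u + q + s / u) / u := by field_simp
  have h3 : a + b / u ^ 2 = (a * u + b / u) / u := by field_simp
  simp only [Pi.div_apply]
  by_cases hD : a * u + b / u = 0
  · rw [h2, h3, hD, zero_div, div_zero, div_zero]
  · rw [h2, h3]; field_simp
noncomputable section

/-- Left interface speed `μ₀` in the equal-density case, with `v₊ = v₋ − u`. -/
def mu0e (ϱ pm pp ϱ1 vm u : ℝ) : ℝ :=
  (1 / 2) * (-(ϱ * u / (ϱ1 - ϱ)) + (pm - pp) / (ϱ * u) + vm + (vm - u))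

/-- Right interface speed `μ₁` in the equal-density case, with `v₊ = v₋ − u`. -/
def mu1e (ϱ pm pp ϱ1 vm u : ℝ) : ℝ :=
  (1 / 2) * (ϱ * u / (ϱ1 - ϱ) + (pm - pp) / (ϱ * u) + vm + (vm - u))

/-- Middle velocity component `β = (ϱv₊ + μ₁(ϱ₁−ϱ))/ϱ₁`. -/
def betae (ϱ pm pp ϱ1 vm u : ℝ) : ℝ :=
  (ϱ * (vm - u) + mu1e ϱ pm pp ϱ1 vm u * (ϱ1 - ϱ)) / ϱ1

/-- `X = ϱ(p₊ − p₋)((2c_v+1)ϱ₁ − ϱ)`. -/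
def Xe (cv ϱ pm pp ϱ1 : ℝ) : ℝ := ϱ * (pp - pm) * ((2 * cv + 1) * ϱ1 - ϱ)

/-- `Y = ϱ₁ϱ((v₋+μ₀)/(v₋−μ₀) + (μ₁+v₊)/(μ₁−v₊))`. -/
def Ye (ϱ pm pp ϱ1 vm u : ℝ) : ℝ :=
  ϱ1 * ϱ * ((vm + mu0e ϱ pm pp ϱ1 vm u) / (vm - mu0e ϱ pm pp ϱ1 vm u) +
    (mu1e ϱ pm pp ϱ1 vm u + (vm - u)) / (mu1e ϱ pm pp ϱ1 vm u - (vm - u)))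

/-- `Z = p₊ + ((ϱ₁−ϱ)ϱ/ϱ₁)(v₊ − μ₁)²`. -/
def Ze (ϱ pm pp ϱ1 vm u : ℝ) : ℝ :=
  pp + ((ϱ1 - ϱ) * ϱ / ϱ1) * ((vm - u) - mu1e ϱ pm pp ϱ1 vm u) ^ 2

/-- The middle pressure `p₁ = Z − X/Y`. -/
def p1e (cv ϱ pm pp ϱ1 vm u : ℝ) : ℝ :=
  Ze ϱ pm pp ϱ1 vm u - Xe cv ϱ pm pp ϱ1 / Ye ϱ pm pp ϱ1 vm u

/-- The subsolution parameter `ε₁ = X/(ϱ₁Y)`. -/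
def eps1e (cv ϱ pm pp ϱ1 vm u : ℝ) : ℝ :=
  Xe cv ϱ pm pp ϱ1 / (ϱ1 * Ye ϱ pm pp ϱ1 vm u)

/-- The subsolution parameter `ε₂`. -/
def eps2e (cv ϱ pm pp ϱ1 vm u : ℝ) : ℝ :=
  (1 / (ϱ1 * ϱ)) *
      ((ϱ1 - ϱ) * (p1e cv ϱ pm pp ϱ1 vm u + pp) +
        2 * cv * (ϱ1 * pp - ϱ * p1e cv ϱ pm pp ϱ1 vm u)) +
    eps1e cv ϱ pm pp ϱ1 vm u *
      (((vm - u) + betae ϱ pm pp ϱ1 vm u) /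
          ((vm - u) - betae ϱ pm pp ϱ1 vm u) * ((ϱ1 - ϱ) / ϱ) - 1)


lemma mu0_form (ϱ pm pp ϱ1 vm : ℝ) (hϱ : ϱ ≠ 0) (hd : ϱ1 - ϱ ≠ 0) {u : ℝ} (hu : u ≠ 0) :
    vm - mu0e ϱ pm pp ϱ1 vm u = ϱ1 / (2 * (ϱ1 - ϱ)) * u + ((pp - pm) / (2 * ϱ)) / u := by
  unfold mu0e; field_simp; ring

lemma mu1_form (ϱ pm pp ϱ1 vm : ℝ) (hϱ : ϱ ≠ 0) (hd : ϱ1 - ϱ ≠ 0) {u : ℝ} (hu : u ≠ 0) :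
    mu1e ϱ pm pp ϱ1 vm u - (vm - u) = ϱ1 / (2 * (ϱ1 - ϱ)) * u + ((pm - pp) / (2 * ϱ)) / u := by
  unfold mu1e; field_simp; ring

lemma beta_form (ϱ pm pp ϱ1 vm : ℝ) (hϱ : ϱ ≠ 0) (hϱ1 : ϱ1 ≠ 0) (hd : ϱ1 - ϱ ≠ 0)
    {u : ℝ} (hu : u ≠ 0) :
    betae ϱ pm pp ϱ1 vm u = vm - u / 2 + ((ϱ1 - ϱ) * (pm - pp) / (2 * ϱ * ϱ1)) / u := by
  unfold betae mu1e; field_simp; ring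

set_option maxHeartbeats 2000000 in
/-- **Lemma (equal-density case `ϱ₋ = ϱ₊ = ϱ`).** If `ϱ₁ > (2c_v+1)ϱ` then for
`u = v₋ − v₊` sufficiently large (with `v₋` fixed): `v₋ − μ₀ > 0`,
`μ₁ − v₊ > 0`, `Y < 0`, `v₊ ≠ β` and `ε₂ > 0`. -/
theorem equal_density_case_large_u
    (cv ϱ pm pp ϱ1 vm : ℝ)
    (hcv : 0 < cv) (hϱ : 0 < ϱ) (hpm : 0 < pm) (hpp : 0 < pp)
    (hϱ1 : (2 * cv + 1) * ϱ < ϱ1) :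
    ∃ u0 : ℝ, 0 < u0 ∧ ∀ u : ℝ, u0 ≤ u →
      0 < vm - mu0e ϱ pm pp ϱ1 vm u ∧
      0 < mu1e ϱ pm pp ϱ1 vm u - (vm - u) ∧
      Ye ϱ pm pp ϱ1 vm u < 0 ∧
      (vm - u) ≠ betae ϱ pm pp ϱ1 vm u ∧
      0 < eps2e cv ϱ pm pp ϱ1 vm u := by
  have hd : 0 < ϱ1 - ϱ := by nlinarith
  have hr1 : 0 < ϱ1 := by nlinarith
  have hdne : ϱ1 - ϱ ≠ 0 := hd.ne'
  have hrne : ϱ ≠ 0 := hϱ.ne'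
  have hr1ne : ϱ1 ≠ 0 := hr1.ne'
  have ha : (0:ℝ) < ϱ1 / (2 * (ϱ1 - ϱ)) := by positivity
  have TF : Tendsto (fun u : ℝ => ϱ1 / (2 * (ϱ1 - ϱ)) * u + ((pp - pm) / (2 * ϱ)) / u)
      atTop atTop := tendsto_lin _ _ ha
  have TG : Tendsto (fun u : ℝ => ϱ1 / (2 * (ϱ1 - ϱ)) * u + ((pm - pp) / (2 * ϱ)) / u)
      atTop atTop := tendsto_lin _ _ ha
  have TQ : Tendsto (fun u : ℝ => (1/2 : ℝ) * u + ((ϱ1 - ϱ) * (pm - pp) / (2 * ϱ * ϱ1)) / u)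
      atTop atTop := tendsto_lin _ _ (by norm_num)
  have evu := eventually_gt_atTop (0:ℝ)
  have evF : ∀ᶠ u : ℝ in atTop, 0 < ϱ1 / (2 * (ϱ1 - ϱ)) * u + ((pp - pm) / (2 * ϱ)) / u :=
    TF.eventually_gt_atTop 0
  have evG : ∀ᶠ u : ℝ in atTop, 0 < ϱ1 / (2 * (ϱ1 - ϱ)) * u + ((pm - pp) / (2 * ϱ)) / u :=
    TG.eventually_gt_atTop 0
  have evQ : ∀ᶠ u : ℝ in atTop, 0 < (1/2 : ℝ) * u + ((ϱ1 - ϱ) * (pm - pp) / (2 * ϱ * ϱ1)) / u :=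
    TQ.eventually_gt_atTop 0
  have ev1 : ∀ᶠ u in atTop, 0 < vm - mu0e ϱ pm pp ϱ1 vm u := by
    filter_upwards [evu, evF] with u hu hF
    rw [mu0_form ϱ pm pp ϱ1 vm hrne hdne hu.ne']; exact hF
  have ev2 : ∀ᶠ u in atTop, 0 < mu1e ϱ pm pp ϱ1 vm u - (vm - u) := by
    filter_upwards [evu, evG] with u hu hG
    rw [mu1_form ϱ pm pp ϱ1 vm hrne hdne hu.ne']; exact hG
  have ev4 : ∀ᶠ u in atTop, (vm - u) ≠ betae ϱ pm pp ϱ1 vm u := by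
    filter_upwards [evu, evQ] with u hu hQ
    rw [beta_form ϱ pm pp ϱ1 vm hrne hr1ne hdne hu.ne']
    intro h
    linarith
  -- Y
  have TA : Tendsto (fun u : ℝ =>
      2 * vm / (ϱ1 / (2 * (ϱ1 - ϱ)) * u + ((pp - pm) / (2 * ϱ)) / u)) atTop (𝓝 0) :=
    tendsto_const_nhds.div_atTop TF
  have TB : Tendsto (fun u : ℝ =>
      ((-2) * u + 2 * vm) / (ϱ1 / (2 * (ϱ1 - ϱ)) * u + ((pm - pp) / (2 * ϱ)) / u)) atTop
      (𝓝 ((-2) / (ϱ1 / (2 * (ϱ1 - ϱ))))) := by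
    simpa only [zero_div, add_zero] using
      tendsto_ratio (-2) (2 * vm) 0 (ϱ1 / (2 * (ϱ1 - ϱ))) ((pm - pp) / (2 * ϱ)) ha.ne'
  have TY : Tendsto (fun u => Ye ϱ pm pp ϱ1 vm u) atTop
      (𝓝 (ϱ1 * ϱ * (0 + (-2) / (ϱ1 / (2 * (ϱ1 - ϱ)))))) := by
    refine (tendsto_const_nhds.mul (TA.add TB)).congr' ?_
    filter_upwards [evu, evF, evG] with u hu hF hG
    have e0 := mu0_form ϱ pm pp ϱ1 vm hrne hdne hu.ne'
    have e1 := mu1_form ϱ pm pp ϱ1 vm hrne hdne hu.ne'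
    have e0' : vm + mu0e ϱ pm pp ϱ1 vm u =
        2 * vm - (ϱ1 / (2 * (ϱ1 - ϱ)) * u + ((pp - pm) / (2 * ϱ)) / u) := by linarith
    have e1' : mu1e ϱ pm pp ϱ1 vm u + (vm - u) =
        ((-2) * u + 2 * vm) + (ϱ1 / (2 * (ϱ1 - ϱ)) * u + ((pm - pp) / (2 * ϱ)) / u) := by
      linarith
    have hFne := hF.ne'
    have hGne := hG.ne'
    simp only [Ye]
    rw [e0, e0', e1, e1']
    set Fv := ϱ1 / (2 * (ϱ1 - ϱ)) * u + (pp - pm) / (2 * ϱ) / u with hFv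
    set Gv := ϱ1 / (2 * (ϱ1 - ϱ)) * u + (pm - pp) / (2 * ϱ) / u with hGv
    field_simp
    ring
  have hneg : (-2:ℝ) / (ϱ1 / (2 * (ϱ1 - ϱ))) < 0 := div_neg_of_neg_of_pos (by norm_num) ha
  have hLY : ϱ1 * ϱ * (0 + (-2) / (ϱ1 / (2 * (ϱ1 - ϱ)))) < 0 := by
    rw [zero_add]; exact mul_neg_of_pos_of_neg (mul_pos hr1 hϱ) hneg
  have ev3 : ∀ᶠ u in atTop, Ye ϱ pm pp ϱ1 vm u < 0 := TY.eventually (eventually_lt_nhds hLY)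
  have hLYne : ϱ1 * ϱ * (0 + (-2) / (ϱ1 / (2 * (ϱ1 - ϱ)))) ≠ 0 := ne_of_lt hLY
  -- Z and p1
  have hC : (0:ℝ) < (ϱ1 - ϱ) * ϱ / ϱ1 := by positivity
  have hG2 : Tendsto (fun u : ℝ =>
      (ϱ1 / (2 * (ϱ1 - ϱ)) * u + ((pm - pp) / (2 * ϱ)) / u) ^ 2) atTop atTop := by
    simpa [pow_two] using TG.atTop_mul_atTop₀ TG
  have TZ : Tendsto (fun u => Ze ϱ pm pp ϱ1 vm u) atTop atTop := by
    refine (tendsto_atTop_add_const_left _ pp (hG2.const_mul_atTop hC)).congr' ?_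
    filter_upwards [evu] with u hu
    have e1 := mu1_form ϱ pm pp ϱ1 vm hrne hdne hu.ne'
    simp only [Ze]
    rw [show (vm - u) - mu1e ϱ pm pp ϱ1 vm u =
        -(ϱ1 / (2 * (ϱ1 - ϱ)) * u + ((pm - pp) / (2 * ϱ)) / u) from by linarith]
    ring
  have TXY : Tendsto (fun u => Xe cv ϱ pm pp ϱ1 / Ye ϱ pm pp ϱ1 vm u) atTop
      (𝓝 (Xe cv ϱ pm pp ϱ1 / (ϱ1 * ϱ * (0 + (-2) / (ϱ1 / (2 * (ϱ1 - ϱ))))))) :=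
    tendsto_const_nhds.div TY hLYne
  have Tp1 : Tendsto (fun u => p1e cv ϱ pm pp ϱ1 vm u) atTop atTop := by
    simp only [p1e, sub_eq_add_neg]
    exact TZ.atTop_add TXY.neg
  have hE1ne : ϱ1 * (ϱ1 * ϱ * (0 + (-2) / (ϱ1 / (2 * (ϱ1 - ϱ))))) ≠ 0 :=
    mul_ne_zero hr1ne hLYne
  have Teps1 : Tendsto (fun u => eps1e cv ϱ pm pp ϱ1 vm u) atTop
      (𝓝 (Xe cv ϱ pm pp ϱ1 / (ϱ1 * (ϱ1 * ϱ * (0 + (-2) / (ϱ1 / (2 * (ϱ1 - ϱ)))))))) := by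
    simp only [eps1e]
    exact tendsto_const_nhds.div (tendsto_const_nhds.mul TY) hE1ne
  -- R
  have TR : Tendsto (fun u : ℝ =>
      ((vm - u) + betae ϱ pm pp ϱ1 vm u) / ((vm - u) - betae ϱ pm pp ϱ1 vm u)) atTop
      (𝓝 ((-(3/2)) / (-(1/2)))) := by
    refine (tendsto_ratio (-(3/2)) (2 * vm) ((ϱ1 - ϱ) * (pm - pp) / (2 * ϱ * ϱ1)) (-(1/2))
      (-((ϱ1 - ϱ) * (pm - pp) / (2 * ϱ * ϱ1))) (by norm_num)).congr' ?_
    filter_upwards [evu] with u hu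
    have eb := beta_form ϱ pm pp ϱ1 vm hrne hr1ne hdne hu.ne'
    have hnum : (vm - u) + betae ϱ pm pp ϱ1 vm u =
        (-(3/2)) * u + 2 * vm + ((ϱ1 - ϱ) * (pm - pp) / (2 * ϱ * ϱ1)) / u := by rw [eb]; ring
    have hden : (vm - u) - betae ϱ pm pp ϱ1 vm u =
        (-(1/2)) * u + (-((ϱ1 - ϱ) * (pm - pp) / (2 * ϱ * ϱ1))) / u := by rw [eb]; ring
    rw [hnum, hden]
  -- eps2
  have hc1 : (0:ℝ) < (ϱ1 - (2 * cv + 1) * ϱ) / (ϱ1 * ϱ) :=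
    div_pos (by linarith) (mul_pos hr1 hϱ)
  have id5 : ∀ u : ℝ, eps2e cv ϱ pm pp ϱ1 vm u =
      ((ϱ1 - (2 * cv + 1) * ϱ) / (ϱ1 * ϱ)) * p1e cv ϱ pm pp ϱ1 vm u +
      (((ϱ1 - ϱ) + 2 * cv * ϱ1) * pp / (ϱ1 * ϱ) + eps1e cv ϱ pm pp ϱ1 vm u *
        (((vm - u) + betae ϱ pm pp ϱ1 vm u) / ((vm - u) - betae ϱ pm pp ϱ1 vm u) *
          ((ϱ1 - ϱ) / ϱ) - 1)) := by
    intro u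
    simp only [eps2e]
    generalize ((vm - u) + betae ϱ pm pp ϱ1 vm u) / ((vm - u) - betae ϱ pm pp ϱ1 vm u) = R
    generalize p1e cv ϱ pm pp ϱ1 vm u = P
    generalize eps1e cv ϱ pm pp ϱ1 vm u = E1
    field_simp
    ring
  have heq : (fun u : ℝ => ((ϱ1 - (2 * cv + 1) * ϱ) / (ϱ1 * ϱ)) * p1e cv ϱ pm pp ϱ1 vm u +
      (((ϱ1 - ϱ) + 2 * cv * ϱ1) * pp / (ϱ1 * ϱ) + eps1e cv ϱ pm pp ϱ1 vm u *
        (((vm - u) + betae ϱ pm pp ϱ1 vm u) / ((vm - u) - betae ϱ pm pp ϱ1 vm u) *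
          ((ϱ1 - ϱ) / ϱ) - 1))) =ᶠ[atTop] (fun u => eps2e cv ϱ pm pp ϱ1 vm u) :=
    Eventually.of_forall fun u => (id5 u).symm
  have Teps2 : Tendsto (fun u => eps2e cv ϱ pm pp ϱ1 vm u) atTop atTop :=
    Tendsto.congr' heq (Tendsto.atTop_add (Tp1.const_mul_atTop hc1)
      (tendsto_const_nhds.add (Teps1.mul
        ((TR.mul tendsto_const_nhds).sub tendsto_const_nhds))))
  have ev5 := Teps2.eventually_gt_atTop 0
  have big := ev1.and (ev2.and (ev3.and (ev4.and ev5)))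
  rw [eventually_atTop] at big
  obtain ⟨N, hN⟩ := big
  refine ⟨max N 1, lt_of_lt_of_le one_pos (le_max_right N 1), fun u hu => ?_⟩
  exact hN u (le_trans (le_max_left N 1) hu)
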